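/- Let 0 < p < q < 1 and |x| < 1, and let F(x) = ∫_p^q t^{b-1}(1-t)^{c-b-1}(1-xt)^{-a} dt. Then F satisfies the inhomogeneous Gauss hypergeometric equation (−x²+x) F''(x) + ((−a−b−1)x + c) F'(x) − a b F(x) = [ (t−1) ∂_x f(x,t) ]_{t=p}^{t=q}, where f is the integrand. -/

import Mathlib

/-- The integrand `f(x,t) = t^(b-1) (1-t)^(c-b-1) (1-xt)^(-a)` (real powers). -/
noncomputable def f8 (a b c x t : ℝ) : ℝ :=
  t ^ (b - 1) * (1 - t) ^ (c - b - 1) * (1 - x * t) ^ (-a)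

/-- `F(x) = ∫_p^q t^(b-1) (1-t)^(c-b-1) (1-xt)^(-a) dt`. -/
noncomputable def F8 (a b c p q x : ℝ) : ℝ := ∫ t in p..q, f8 a b c x t

open MeasureTheory Set Metric Filter
open scoped Interval Topology

/-- The `n`-th derivative in `x` of the integrand. -/
noncomputable def g8 (a b c : ℝ) (n : ℕ) (x t : ℝ) : ℝ :=
  t ^ (b - 1) * (1 - t) ^ (c - b - 1) *
    ((∏ i ∈ Finset.range n, (a + i)) * t ^ n * (1 - x * t) ^ (-a - n))

lemma f8_eq_g8 (a b c x t : ℝ) : f8 a b c x t = g8 a b c 0 x t := by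
  simp [f8, g8]

lemma hasDerivAt_g8 (a b c : ℝ) (n : ℕ) (x t : ℝ) (h : 0 < 1 - x * t) :
    HasDerivAt (fun y => g8 a b c n y t) (g8 a b c (n + 1) x t) x := by
  have h1 : HasDerivAt (fun y : ℝ => 1 - y * t) (-t) x := by
    simpa using ((hasDerivAt_id x).mul_const t).const_sub 1
  have h2 : HasDerivAt (fun y : ℝ => (1 - y * t) ^ (-a - n))
      (-t * (-a - n) * (1 - x * t) ^ (-a - n - 1)) x :=
    h1.rpow_const (Or.inl h.ne')
  have h3 := (h2.const_mul ((∏ i ∈ Finset.range n, (a + i)) * t ^ n)).const_mul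
      (t ^ (b - 1) * (1 - t) ^ (c - b - 1))
  have hfun : (fun y => g8 a b c n y t) = fun y =>
      t ^ (b - 1) * (1 - t) ^ (c - b - 1) *
        ((∏ i ∈ Finset.range n, (a + i)) * t ^ n * (1 - y * t) ^ (-a - n)) := by
    funext y; simp [g8]
  rw [hfun]
  convert h3 using 1
  · rfl
  · rfl
  have he : -a - ((n : ℝ) + 1) = -a - n - 1 := by ring
  unfold g8
  simp only [Finset.prod_range_succ, Nat.cast_add, Nat.cast_one, he]
  ring

/-- Joint continuity of `g8` on the relevant open region. -/
lemma contOn_g8 (a b c : ℝ) (n : ℕ) :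
    ContinuousOn (fun z : ℝ × ℝ => g8 a b c n z.1 z.2)
      {z : ℝ × ℝ | 0 < z.2 ∧ z.2 < 1 ∧ 0 < 1 - z.1 * z.2} := by
  intro z hz
  obtain ⟨h1, h2, h3⟩ := hz
  apply ContinuousAt.continuousWithinAt
  have c1 : ContinuousAt (fun z : ℝ × ℝ => z.2 ^ (b - 1)) z :=
    continuousAt_snd.rpow_const (Or.inl h1.ne')
  have c2 : ContinuousAt (fun z : ℝ × ℝ => (1 - z.2) ^ (c - b - 1)) z :=
    (continuousAt_const.sub continuousAt_snd).rpow_const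
      (Or.inl (ne_of_gt (by show (0:ℝ) < 1 - z.2; linarith)))
  have c3 : ContinuousAt (fun z : ℝ × ℝ => (1 - z.1 * z.2) ^ (-a - n)) z :=
    (continuousAt_const.sub (continuousAt_fst.mul continuousAt_snd)).rpow_const
      (Or.inl (ne_of_gt (by show (0:ℝ) < 1 - z.1 * z.2; linarith)))
  exact (c1.mul c2).mul ((continuousAt_const.mul (continuousAt_snd.pow n)).mul c3)

lemma pos_one_sub_mul {x t q : ℝ} (hx : |x| < 1) (ht0 : 0 < t) (htq : t ≤ q) (hq : q < 1) :
    0 < 1 - x * t := by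
  have h1 : x * t ≤ |x| * t := mul_le_mul_of_nonneg_right (le_abs_self x) ht0.le
  nlinarith [abs_nonneg x]

lemma contOn_g8_t (a b c p q : ℝ) (hp : 0 < p) (hq : q < 1) (n : ℕ) {y : ℝ} (hy : |y| < 1) :
    ContinuousOn (fun t => g8 a b c n y t) (Icc p q) := by
  have : (fun t => g8 a b c n y t) =
      (fun z : ℝ × ℝ => g8 a b c n z.1 z.2) ∘ (fun t => (y, t)) := rfl
  rw [this]
  apply (contOn_g8 a b c n).comp ((continuous_const.prodMk continuous_id).continuousOn)
  intro t ht
  exact ⟨hp.trans_le ht.1, lt_of_le_of_lt ht.2 hq,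
    pos_one_sub_mul hy (hp.trans_le ht.1) ht.2 hq⟩

lemma intervalIntegrable_g8 (a b c p q : ℝ) (hp : 0 < p) (hpq : p < q) (hq : q < 1) (n : ℕ)
    {y : ℝ} (hy : |y| < 1) :
    IntervalIntegrable (fun t => g8 a b c n y t) volume p q := by
  apply ContinuousOn.intervalIntegrable
  rw [uIcc_of_le hpq.le]
  exact contOn_g8_t a b c p q hp hq n hy

/-- Differentiation under the integral sign. -/
lemma hasDerivAt_intg8 (a b c p q : ℝ) (hp : 0 < p) (hpq : p < q) (hq : q < 1) (n : ℕ)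
    {x : ℝ} (hx : |x| < 1) :
    HasDerivAt (fun y => ∫ t in p..q, g8 a b c n y t)
      (∫ t in p..q, g8 a b c (n + 1) x t) x := by
  set ε : ℝ := (1 - |x|) / 2 with hε
  have hε0 : 0 < ε := by
    have := abs_nonneg x; simp only [hε]; linarith
  have hball : ∀ y ∈ closedBall x ε, |y| < 1 := by
    intro y hy
    have h1 : |y - x| ≤ ε := by simpa [Real.dist_eq] using mem_closedBall.mp hy
    have := abs_sub_abs_le_abs_sub y x
    simp only [hε] at h1 ⊢; linarith
  have hK : IsCompact (closedBall x ε ×ˢ Icc p q) :=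
    (isCompact_closedBall x ε).prod isCompact_Icc
  have hsub : closedBall x ε ×ˢ Icc p q ⊆
      {z : ℝ × ℝ | 0 < z.2 ∧ z.2 < 1 ∧ 0 < 1 - z.1 * z.2} := by
    rintro ⟨y, t⟩ ⟨hy, ht⟩
    exact ⟨hp.trans_le ht.1, lt_of_le_of_lt ht.2 hq,
      pos_one_sub_mul (hball y hy) (hp.trans_le ht.1) ht.2 hq⟩
  obtain ⟨C, hC⟩ := hK.exists_bound_of_continuousOn ((contOn_g8 a b c (n + 1)).mono hsub)
  have hIoc : Ι p q = Ioc p q := uIoc_of_le hpq.le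
  have hmeas : ∀ y : ℝ, |y| < 1 →
      AEStronglyMeasurable (fun t => g8 a b c n y t) (volume.restrict (Ι p q)) := by
    intro y hy
    exact ((contOn_g8_t a b c p q hp hq n hy).mono
      (by rw [hIoc]; exact Ioc_subset_Icc_self)).aestronglyMeasurable
      (by rw [hIoc]; exact measurableSet_Ioc)
  refine (intervalIntegral.hasDerivAt_integral_of_dominated_loc_of_deriv_le (ball_mem_nhds x hε0)
    ?_ (intervalIntegrable_g8 a b c p q hp hpq hq n hx) ?_ ?_
    (intervalIntegrable_const (c := C)) ?_).2
  · have hopen : IsOpen {y : ℝ | |y| < 1} := isOpen_lt continuous_abs continuous_const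
    filter_upwards [hopen.mem_nhds hx] with y hy using hmeas y hy
  · exact ((contOn_g8_t a b c p q hp hq (n + 1) hx).mono
      (by rw [hIoc]; exact Ioc_subset_Icc_self)).aestronglyMeasurable
      (by rw [hIoc]; exact measurableSet_Ioc)
  · refine Eventually.of_forall fun t ht y hy => ?_
    rw [hIoc] at ht
    exact hC (y, t) ⟨ball_subset_closedBall hy, Ioc_subset_Icc_self ht⟩
  · refine Eventually.of_forall fun t ht y hy => ?_
    rw [hIoc] at ht
    exact hasDerivAt_g8 a b c n y t
      (pos_one_sub_mul (hball y (ball_subset_closedBall hy)) (hp.trans ht.1) ht.2 hq)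

/-- The key pointwise identity: the hypergeometric combination of the integrand and its
`x`-derivatives is the `t`-derivative of `(t-1) ∂ₓ f`. -/
lemma hasDerivAt_boundary (a b c x : ℝ) {t : ℝ} (ht0 : 0 < t) (ht1 : t < 1)
    (hxt : 0 < 1 - x * t) :
    HasDerivAt (fun s => (s - 1) * g8 a b c 1 x s)
      ((-x ^ 2 + x) * g8 a b c 2 x t + ((-a - b - 1) * x + c) * g8 a b c 1 x t
        - a * b * g8 a b c 0 x t) t := by
  have h1t : (0 : ℝ) < 1 - t := by linarith
  have hP : HasDerivAt (fun s : ℝ => s ^ (b - 1)) (1 * (b - 1) * t ^ (b - 1 - 1)) t :=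
    (hasDerivAt_id t).rpow_const (Or.inl ht0.ne')
  have hQ : HasDerivAt (fun s : ℝ => (1 - s) ^ (c - b - 1))
      (-1 * (c - b - 1) * (1 - t) ^ (c - b - 1 - 1)) t :=
    (((hasDerivAt_id t).const_sub 1)).rpow_const (Or.inl h1t.ne')
  have hR : HasDerivAt (fun s : ℝ => (1 - x * s) ^ (-a - 1))
      (-x * (-a - 1) * (1 - x * t) ^ (-a - 1 - 1)) t := by
    have hin : HasDerivAt (fun s : ℝ => 1 - x * s) (-x) t := by
      simpa using ((hasDerivAt_id t).const_mul x).const_sub 1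
    exact hin.rpow_const (Or.inl hxt.ne')
  have hAS : HasDerivAt (fun s : ℝ => a * s) (a * 1) t := (hasDerivAt_id t).const_mul a
  have hPQ := hP.mul hQ
  have hASR := hAS.mul hR
  have hinner := hPQ.mul hASR
  have hfull := ((hasDerivAt_id t).sub_const 1).mul hinner
  have hfun : (fun s => (s - 1) * g8 a b c 1 x s) = fun s =>
      (id s - 1) * (s ^ (b - 1) * (1 - s) ^ (c - b - 1) * (a * s * (1 - x * s) ^ (-a - 1))) := by
    funext s; simp [g8]
  rw [hfun]
  convert hfull using 1
  · rfl
  · rfl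
  · rfl
  have e1 : t ^ (b - 1 - 1) = t ^ (b - 1) / t := by
    rw [show b - 1 - 1 = (b - 1) - 1 by ring, Real.rpow_sub ht0, Real.rpow_one]
  have e2 : (1 - t) ^ (c - b - 1 - 1) = (1 - t) ^ (c - b - 1) / (1 - t) := by
    rw [show c - b - 1 - 1 = (c - b - 1) - 1 by ring, Real.rpow_sub h1t, Real.rpow_one]
  have e3 : (1 - x * t) ^ (-a - 1) = (1 - x * t) ^ (-a - 2) * (1 - x * t) := by
    rw [show -a - 1 = (-a - 2) + 1 by ring, Real.rpow_add hxt, Real.rpow_one]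
  have e4 : (1 - x * t) ^ (-a - 1 - 1) = (1 - x * t) ^ (-a - 2) := by
    rw [show -a - 1 - 1 = -a - 2 by ring]
  have e5 : (1 - x * t) ^ (-a) = (1 - x * t) ^ (-a - 2) * ((1 - x * t) * (1 - x * t)) := by
    rw [show -a = (-a - 2) + 1 + 1 by ring, Real.rpow_add hxt, Real.rpow_add hxt,
      Real.rpow_one]
    ring
  unfold g8
  simp only [Finset.prod_range_succ, Finset.prod_range_zero, Nat.cast_zero, Nat.cast_one,
    Nat.cast_ofNat, pow_zero, pow_one, one_mul, sub_zero, id_eq, Pi.mul_apply]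
  rw [show -a - (2 : ℝ) = -a - 2 by norm_num] at *
  rw [e1, e2, e3, e4, e5]
  field_simp
  ring

theorem stmt8 (a b c p q x : ℝ) (hp : 0 < p) (hpq : p < q) (hq : q < 1) (hx : |x| < 1) :
    (-x ^ 2 + x) * deriv (deriv (F8 a b c p q)) x
      + ((-a - b - 1) * x + c) * deriv (F8 a b c p q) x
      - a * b * F8 a b c p q x
      = (q - 1) * deriv (fun y => f8 a b c y q) x
        - (p - 1) * deriv (fun y => f8 a b c y p) x := by
  have hq0 : 0 < q := hp.trans hpq
  have hF8eq : F8 a b c p q = fun y => ∫ t in p..q, g8 a b c 0 y t := by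
    funext y; simp only [F8, f8_eq_g8]
  -- first derivative
  have hD1 : ∀ y : ℝ, |y| < 1 →
      HasDerivAt (F8 a b c p q) (∫ t in p..q, g8 a b c 1 y t) y := by
    intro y hy
    rw [hF8eq]
    exact hasDerivAt_intg8 a b c p q hp hpq hq 0 hy
  have hderiv1 : deriv (F8 a b c p q) x = ∫ t in p..q, g8 a b c 1 x t := (hD1 x hx).deriv
  -- second derivative
  have hopen : IsOpen {y : ℝ | |y| < 1} := isOpen_lt continuous_abs continuous_const
  have hEv : deriv (F8 a b c p q) =ᶠ[𝓝 x] fun y => ∫ t in p..q, g8 a b c 1 y t := by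
    filter_upwards [hopen.mem_nhds hx] with y hy using (hD1 y hy).deriv
  have hderiv2 : deriv (deriv (F8 a b c p q)) x = ∫ t in p..q, g8 a b c 2 x t := by
    rw [hEv.deriv_eq]
    exact (hasDerivAt_intg8 a b c p q hp hpq hq 1 hx).deriv
  -- boundary derivatives
  have hbq : deriv (fun y => f8 a b c y q) x = g8 a b c 1 x q := by
    have : (fun y => f8 a b c y q) = fun y => g8 a b c 0 y q := by
      funext y; exact f8_eq_g8 a b c y q
    rw [this]
    exact (hasDerivAt_g8 a b c 0 x q (pos_one_sub_mul hx hq0 le_rfl hq)).deriv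
  have hbp : deriv (fun y => f8 a b c y p) x = g8 a b c 1 x p := by
    have : (fun y => f8 a b c y p) = fun y => g8 a b c 0 y p := by
      funext y; exact f8_eq_g8 a b c y p
    rw [this]
    exact (hasDerivAt_g8 a b c 0 x p (pos_one_sub_mul hx hp hpq.le hq)).deriv
  -- FTC
  have hftc : (∫ t in p..q, ((-x ^ 2 + x) * g8 a b c 2 x t
        + ((-a - b - 1) * x + c) * g8 a b c 1 x t - a * b * g8 a b c 0 x t))
      = (q - 1) * g8 a b c 1 x q - (p - 1) * g8 a b c 1 x p := by
    apply intervalIntegral.integral_eq_sub_of_hasDerivAt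
    · intro t ht
      rw [uIcc_of_le hpq.le] at ht
      exact hasDerivAt_boundary a b c x (hp.trans_le ht.1) (lt_of_le_of_lt ht.2 hq)
        (pos_one_sub_mul hx (hp.trans_le ht.1) ht.2 hq)
    · have I0 := intervalIntegrable_g8 a b c p q hp hpq hq 0 hx
      have I1 := intervalIntegrable_g8 a b c p q hp hpq hq 1 hx
      have I2 := intervalIntegrable_g8 a b c p q hp hpq hq 2 hx
      exact ((I2.const_mul _).add (I1.const_mul _)).sub (I0.const_mul _)
  -- linearity of the integral
  have hlin : (∫ t in p..q, ((-x ^ 2 + x) * g8 a b c 2 x t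
        + ((-a - b - 1) * x + c) * g8 a b c 1 x t - a * b * g8 a b c 0 x t))
      = (-x ^ 2 + x) * (∫ t in p..q, g8 a b c 2 x t)
        + ((-a - b - 1) * x + c) * (∫ t in p..q, g8 a b c 1 x t)
        - a * b * (∫ t in p..q, g8 a b c 0 x t) := by
    have I0 := intervalIntegrable_g8 a b c p q hp hpq hq 0 hx
    have I1 := intervalIntegrable_g8 a b c p q hp hpq hq 1 hx
    have I2 := intervalIntegrable_g8 a b c p q hp hpq hq 2 hx
    rw [intervalIntegral.integral_sub ((I2.const_mul _).add (I1.const_mul _)) (I0.const_mul _),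
      intervalIntegral.integral_add (I2.const_mul _) (I1.const_mul _),
      intervalIntegral.integral_const_mul, intervalIntegral.integral_const_mul,
      intervalIntegral.integral_const_mul]
  have hF8x : F8 a b c p q x = ∫ t in p..q, g8 a b c 0 x t := by rw [hF8eq]
  rw [hderiv1, hderiv2, hbq, hbp, hF8x, ← hftc, hlin]
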